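/- Let G = (V,E) be a finite bi-directed (simple) graph and let p be a binary distribution on V taking values in I = {0,1}^V. Then p satisfies the connected set Markov property for G if and only if for every disconnected set D ⊆ V, with unique partition D = C_1 ∪̇ ⋯ ∪̇ C_r into inclusion-maximal connected subsets, one has P(X_D = i_D) = P(X_{C_1} = i_{C_1})·P(X_{C_2} = i_{C_2})⋯P(X_{C_r} = i_{C_r}) for all i ∈ I. -/

import Mathlib

open Finset

namespace BMMI

variable {V : Type*} [Fintype V] [DecidableEq V]

/-- `Pr p A a` is the probability of the event `X_A = a|_A` under `p`. -/
def Pr (p : (V → Bool) → ℝ) (A : Finset V) (a : V → Bool) : ℝ :=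
  ∑ i ∈ Finset.univ.filter (fun i : V → Bool => ∀ v ∈ A, i v = a v), p i

/-- `p` is a binary distribution on `V`. -/
def IsDist (p : (V → Bool) → ℝ) : Prop :=
  (∀ i, 0 ≤ p i) ∧ ∑ i : V → Bool, p i = 1

/-- `Pr2 p S T a b` is the probability of the joint event `X_S = a|_S, X_T = b|_T`. -/
def Pr2 (p : (V → Bool) → ℝ) (S T : Finset V) (a b : V → Bool) : ℝ :=
  ∑ i ∈ Finset.univ.filter
      (fun i : V → Bool => (∀ v ∈ S, i v = a v) ∧ (∀ v ∈ T, i v = b v)), p i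

/-- `X_S` and `X_T` are independent under `p`. -/
def Indep (p : (V → Bool) → ℝ) (S T : Finset V) : Prop :=
  ∀ a b : V → Bool, Pr2 p S T a b = Pr p S a * Pr p T b

/-- `spo G A` consists of `A` together with all vertices adjacent to a vertex of `A`. -/
def spo (G : SimpleGraph V) [DecidableRel G.Adj] (A : Finset V) : Finset V :=
  Finset.univ.filter (fun w => w ∈ A ∨ ∃ v ∈ A, G.Adj v w)

/-- `C` is connected in `G`: every pair of vertices of `C` is joined by a walk
all of whose vertices lie in `C`. -/
def Conn (G : SimpleGraph V) (C : Finset V) : Prop :=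
  ∀ v ∈ C, ∀ w ∈ C, ∃ W : G.Walk v w, ∀ x ∈ W.support, x ∈ C

/-- The connected set Markov property for the bi-directed graph `G`. -/
def CSMP (G : SimpleGraph V) [DecidableRel G.Adj] (p : (V → Bool) → ℝ) : Prop :=
  ∀ C : Finset V, C.Nonempty → Conn G C → Indep p C (Finset.univ \ spo G C)

/-- `C` is an inclusion-maximal connected subset of `D` (a connected component of the
induced subgraph on `D`). -/
def IsMaxConnComp (G : SimpleGraph V) (D C : Finset V) : Prop :=
  C ⊆ D ∧ C.Nonempty ∧ Conn G C ∧
    ∀ C' : Finset V, C ⊆ C' → C' ⊆ D → Conn G C' → C' = C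

/-- The Möbius parameter `q_A(p) = P(X_A = 0)`. -/
def qM (p : (V → Bool) → ℝ) (A : Finset V) : ℝ := Pr p A (fun _ => false)

set_option linter.unusedSectionVars false

section Aux

lemma Pr_congr (p : (V → Bool) → ℝ) (A : Finset V) {a b : V → Bool}
    (h : ∀ v ∈ A, a v = b v) : Pr p A a = Pr p A b := by
  unfold Pr
  apply Finset.sum_congr _ (fun _ _ => rfl)
  ext i
  simp only [Finset.mem_filter, Finset.mem_univ, true_and]
  exact ⟨fun hi v hv => (hi v hv).trans (h v hv),
    fun hi v hv => (hi v hv).trans (h v hv).symm⟩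

lemma Pr_empty (p : (V → Bool) → ℝ) (hp : IsDist p) (a : V → Bool) :
    Pr p (∅ : Finset V) a = 1 := by
  unfold Pr
  simpa using hp.2

lemma Pr2_empty_right (p : (V → Bool) → ℝ) (S : Finset V) (a b : V → Bool) :
    Pr2 p S ∅ a b = Pr p S a := by
  unfold Pr2 Pr
  apply Finset.sum_congr _ (fun _ _ => rfl)
  ext i
  simp

lemma Pr2_eq_Pr_union (p : (V → Bool) → ℝ) {S T : Finset V}
    (hst : ∀ x ∈ S, x ∉ T) (a b : V → Bool) :
    Pr2 p S T a b = Pr p (S ∪ T) (fun v => if v ∈ S then a v else b v) := by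
  unfold Pr2 Pr
  apply Finset.sum_congr _ (fun _ _ => rfl)
  ext i
  simp only [Finset.mem_filter, Finset.mem_univ, true_and, Finset.mem_union]
  constructor
  · rintro ⟨h1, h2⟩ v hv
    rcases hv with h | h
    · rw [if_pos h]; exact h1 v h
    · rw [if_neg (fun hs => hst v hs h)]; exact h2 v h
  · intro h
    constructor
    · intro v hv
      have := h v (Or.inl hv); rwa [if_pos hv] at this
    · intro v hv
      have := h v (Or.inr hv); rwa [if_neg (fun hs => hst v hs hv)] at this

lemma Pr_union_eq_Pr2 (p : (V → Bool) → ℝ) (S T : Finset V) (a : V → Bool) :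
    Pr p (S ∪ T) a = Pr2 p S T a a := by
  unfold Pr2 Pr
  apply Finset.sum_congr _ (fun _ _ => rfl)
  ext i
  simp only [Finset.mem_filter, Finset.mem_univ, true_and, Finset.mem_union]
  constructor
  · intro h
    exact ⟨fun v hv => h v (Or.inl hv), fun v hv => h v (Or.inr hv)⟩
  · rintro ⟨h1, h2⟩ v hv
    rcases hv with h | h
    · exact h1 v h
    · exact h2 v h

lemma sum_fiber_aux (p : (V → Bool) → ℝ) (P : (V → Bool) → Prop) [DecidablePred P]
    {T' T : Finset V} (hT : T' ⊆ T) (b : V → Bool) :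
    ∑ i ∈ Finset.univ.filter (fun i : V → Bool => P i ∧ ∀ v ∈ T', i v = b v), p i
      = ∑ c : ((T \ T' : Finset V) → Bool),
          ∑ i ∈ Finset.univ.filter (fun i : V → Bool =>
              P i ∧ ∀ v ∈ T, i v = if h : v ∈ T \ T' then c ⟨v, h⟩ else b v), p i := by
  classical
  rw [← Finset.sum_fiberwise_of_maps_to
      (s := Finset.univ.filter (fun i : V → Bool => P i ∧ ∀ v ∈ T', i v = b v))
      (t := (Finset.univ : Finset (((T \ T' : Finset V)) → Bool)))
      (g := fun (i : V → Bool) (x : (T \ T' : Finset V)) => i x)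
      (fun x _ => Finset.mem_univ _) p]
  apply Finset.sum_congr rfl
  intro c _
  apply Finset.sum_congr _ (fun _ _ => rfl)
  rw [Finset.filter_filter]
  ext i
  simp only [Finset.mem_filter, Finset.mem_univ, true_and]
  constructor
  · rintro ⟨⟨hP, hT'⟩, hg⟩
    refine ⟨hP, fun v hv => ?_⟩
    by_cases hvd : v ∈ T \ T'
    · rw [dif_pos hvd]
      exact congrFun hg ⟨v, hvd⟩
    · rw [dif_neg hvd]
      have hvT' : v ∈ T' := by
        by_contra hc
        exact hvd (Finset.mem_sdiff.2 ⟨hv, hc⟩)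
      exact hT' v hvT'
  · rintro ⟨hP, hTc⟩
    refine ⟨⟨hP, fun v hv => ?_⟩, ?_⟩
    · have hnd : v ∉ T \ T' := fun hc => (Finset.mem_sdiff.1 hc).2 hv
      have := hTc v (hT hv)
      rwa [dif_neg hnd] at this
    · funext x
      have := hTc x (Finset.mem_sdiff.1 x.2).1
      rwa [dif_pos x.2] at this

lemma Pr_marg (p : (V → Bool) → ℝ) {T' T : Finset V} (hT : T' ⊆ T) (b : V → Bool) :
    Pr p T' b = ∑ c : ((T \ T' : Finset V) → Bool),
      Pr p T (fun v => if h : v ∈ T \ T' then c ⟨v, h⟩ else b v) := by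
  classical
  have := sum_fiber_aux p (fun _ => True) hT b
  unfold Pr
  simpa using this

lemma Pr2_marg (p : (V → Bool) → ℝ) (S : Finset V) {T' T : Finset V} (hT : T' ⊆ T)
    (a b : V → Bool) :
    Pr2 p S T' a b = ∑ c : ((T \ T' : Finset V) → Bool),
      Pr2 p S T a (fun v => if h : v ∈ T \ T' then c ⟨v, h⟩ else b v) := by
  classical
  have := sum_fiber_aux p (fun i : V → Bool => ∀ v ∈ S, i v = a v) hT b
  unfold Pr2
  convert this using 2

lemma indep_mono (p : (V → Bool) → ℝ) {S T T' : Finset V}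
    (h : Indep p S T) (hT : T' ⊆ T) : Indep p S T' := by
  intro a b
  rw [Pr2_marg p S hT a b, Pr_marg p hT b, Finset.mul_sum]
  exact Finset.sum_congr rfl (fun c _ => h a _)

lemma mem_spo {G : SimpleGraph V} [DecidableRel G.Adj] {A : Finset V} {w : V} :
    w ∈ spo G A ↔ w ∈ A ∨ ∃ v ∈ A, G.Adj v w := by
  simp [spo]

lemma conn_union {G : SimpleGraph V} {C₁ C₂ : Finset V} {x : V}
    (h1 : Conn G C₁) (h2 : Conn G C₂) (hx1 : x ∈ C₁) (hx2 : x ∈ C₂) :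
    Conn G (C₁ ∪ C₂) := by
  have key : ∀ v ∈ C₁ ∪ C₂, ∃ W : G.Walk v x, ∀ y ∈ W.support, y ∈ C₁ ∪ C₂ := by
    intro v hv
    rcases Finset.mem_union.1 hv with h | h
    · obtain ⟨W, hW⟩ := h1 v h x hx1
      exact ⟨W, fun y hy => Finset.mem_union_left _ (hW y hy)⟩
    · obtain ⟨W, hW⟩ := h2 v h x hx2
      exact ⟨W, fun y hy => Finset.mem_union_right _ (hW y hy)⟩
  intro v hv w hw
  obtain ⟨W1, hW1⟩ := key v hv
  obtain ⟨W2, hW2⟩ := key w hw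
  refine ⟨W1.append W2.reverse, ?_⟩
  intro y hy
  rcases (SimpleGraph.Walk.mem_support_append_iff _ _).1 hy with h | h
  · exact hW1 y h
  · exact hW2 y (by simpa [SimpleGraph.Walk.support_reverse] using h)

lemma maxcomp_eq_of_inter {G : SimpleGraph V} {D C₁ C₂ : Finset V}
    (h1 : IsMaxConnComp G D C₁) (h2 : IsMaxConnComp G D C₂) {x : V}
    (hx1 : x ∈ C₁) (hx2 : x ∈ C₂) : C₁ = C₂ := by
  have hu := conn_union h1.2.2.1 h2.2.2.1 hx1 hx2
  have e1 := h1.2.2.2 (C₁ ∪ C₂) Finset.subset_union_left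
    (Finset.union_subset h1.1 h2.1) hu
  have e2 := h2.2.2.2 (C₁ ∪ C₂) Finset.subset_union_right
    (Finset.union_subset h1.1 h2.1) hu
  exact e1.symm.trans e2

lemma maxcomp_sdiff {G : SimpleGraph V} {D C₁ : Finset V}
    (h1 : IsMaxConnComp G D C₁) (C : Finset V) :
    IsMaxConnComp G (D \ C₁) C ↔ (IsMaxConnComp G D C ∧ C ≠ C₁) := by
  constructor
  · rintro ⟨hCD, hne, hconn, hmax⟩
    have hCD' : C ⊆ D := hCD.trans (Finset.sdiff_subset)
    obtain ⟨y, hy⟩ := hne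
    have hyC₁ : y ∉ C₁ := (Finset.mem_sdiff.1 (hCD hy)).2
    refine ⟨⟨hCD', ⟨y, hy⟩, hconn, ?_⟩, fun he => hyC₁ (he ▸ hy)⟩
    intro C' hCC' hC'D hC'conn
    have hC'T : C' ⊆ D \ C₁ := by
      intro z hz
      rw [Finset.mem_sdiff]
      refine ⟨hC'D hz, fun hzC₁ => ?_⟩
      -- z ∈ C' ∩ C₁ : then C' ∪ C₁ is connected ⊆ D, so C' ⊆ C₁, contradicting y
      have hu := conn_union hC'conn h1.2.2.1 hz hzC₁
      have := h1.2.2.2 (C' ∪ C₁) Finset.subset_union_right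
        (Finset.union_subset hC'D h1.1) hu
      have hC'C₁ : C' ⊆ C₁ := by
        intro t ht; rw [← this]; exact Finset.mem_union_left _ ht
      exact hyC₁ (hC'C₁ (hCC' hy))
    exact hmax C' hCC' hC'T hC'conn
  · rintro ⟨⟨hCD, hne, hconn, hmax⟩, hneq⟩
    have hCT : C ⊆ D \ C₁ := by
      intro z hz
      rw [Finset.mem_sdiff]
      refine ⟨hCD hz, fun hzC₁ => ?_⟩
      exact hneq (maxcomp_eq_of_inter ⟨hCD, hne, hconn, hmax⟩ h1 hz hzC₁)
    exact ⟨hCT, hne, hconn, fun C' hCC' hC'T hC'conn =>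
      hmax C' hCC' (hC'T.trans Finset.sdiff_subset) hC'conn⟩

lemma maxcomp_self {G : SimpleGraph V} {T : Finset V}
    (hT : Conn G T) (hne : T.Nonempty) (C : Finset V) :
    IsMaxConnComp G T C ↔ C = T := by
  constructor
  · rintro ⟨hCT, _, _, hmax⟩
    exact (hmax T hCT Finset.Subset.rfl hT).symm
  · rintro rfl
    exact ⟨Finset.Subset.rfl, hne, hT, fun C' h1 h2 _ => Finset.Subset.antisymm h2 h1⟩

noncomputable def compF (G : SimpleGraph V) (D : Finset V) (v : V) : Finset V :=
  @Finset.filter V (fun w => ∃ W : G.Walk v w, ∀ x ∈ W.support, x ∈ D)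
    (Classical.decPred _) D

lemma mem_compF {G : SimpleGraph V} {D : Finset V} {v w : V} :
    w ∈ compF G D v ↔ w ∈ D ∧ ∃ W : G.Walk v w, ∀ x ∈ W.support, x ∈ D := by
  unfold compF
  exact @Finset.mem_filter V _ (Classical.decPred _) D w

lemma self_mem_compF {G : SimpleGraph V} {D : Finset V} {v : V} (hv : v ∈ D) :
    v ∈ compF G D v :=
  mem_compF.2 ⟨hv, SimpleGraph.Walk.nil, by simpa using hv⟩

lemma compF_isMax {G : SimpleGraph V} {D : Finset V} {v : V} (hv : v ∈ D) :
    IsMaxConnComp G D (compF G D v) := by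
  refine ⟨fun x hx => (mem_compF.1 hx).1, ⟨v, self_mem_compF hv⟩, ?_, ?_⟩
  · -- connected
    intro w₁ h₁ w₂ h₂
    obtain ⟨hw₁D, W₁, hW₁⟩ := mem_compF.1 h₁
    obtain ⟨hw₂D, W₂, hW₂⟩ := mem_compF.1 h₂
    refine ⟨W₁.reverse.append W₂, ?_⟩
    intro x hx
    have hxD : ∃ (W : G.Walk v x), ∀ y ∈ W.support, y ∈ D := by
      rcases (SimpleGraph.Walk.mem_support_append_iff _ _).1 hx with h | h
      · have hx1 : x ∈ W₁.support := by
          simpa [SimpleGraph.Walk.support_reverse] using h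
        exact ⟨W₁.takeUntil x hx1, fun y hy =>
          hW₁ y (SimpleGraph.Walk.support_takeUntil_subset _ hx1 hy)⟩
      · exact ⟨W₂.takeUntil x h, fun y hy =>
          hW₂ y (SimpleGraph.Walk.support_takeUntil_subset _ h hy)⟩
    obtain ⟨W, hW⟩ := hxD
    exact mem_compF.2 ⟨hW x W.end_mem_support, W, hW⟩
  · -- maximal
    intro C' hsub hC'D hC'conn
    refine Finset.Subset.antisymm ?_ hsub
    intro w hw
    obtain ⟨W, hW⟩ := hC'conn v (hsub (self_mem_compF hv)) w hw
    exact mem_compF.2 ⟨hC'D hw, W, fun x hx => hC'D (hW x hx)⟩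

lemma walk_stay {G : SimpleGraph V} {C T : Finset V}
    (hadj : ∀ u ∈ C, ∀ w ∈ T, ¬ G.Adj u w) :
    ∀ {v w : V} (W : G.Walk v w), (∀ x ∈ W.support, x ∈ C ∪ T) → v ∈ C → w ∈ C := by
  intro v w W
  induction W with
  | nil => exact fun _ hv => hv
  | @cons a b c hab q ih =>
    intro hsup ha
    have hb : b ∈ C ∪ T := hsup b
      (by rw [SimpleGraph.Walk.support_cons]; exact List.mem_cons_of_mem _ q.start_mem_support)
    have hbC : b ∈ C := by
      rcases Finset.mem_union.1 hb with h | h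
      · exact h
      · exact absurd hab (hadj a ha b h)
    exact ih (fun x hx => hsup x
      (by rw [SimpleGraph.Walk.support_cons]; exact List.mem_cons_of_mem _ hx)) hbC

end Aux


lemma csmp_forward (G : SimpleGraph V) [DecidableRel G.Adj] (p : (V → Bool) → ℝ)
    (h : CSMP G p) :
    ∀ D : Finset V, ¬ Conn G D →
      ∀ 𝒞 : Finset (Finset V), (∀ C : Finset V, C ∈ 𝒞 ↔ IsMaxConnComp G D C) →
        ∀ i : V → Bool, Pr p D i = ∏ C ∈ 𝒞, Pr p C i := by
  intro D
  induction D using Finset.strongInduction with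
  | _ D ih =>
    intro hD 𝒞 h𝒞 i
    have hDne : D.Nonempty := by
      rcases D.eq_empty_or_nonempty with rfl | h'
      · exact absurd (fun v hv => (Finset.notMem_empty v hv).elim) hD
      · exact h'
    obtain ⟨v₀, hv₀⟩ := hDne
    have hmax : IsMaxConnComp G D (compF G D v₀) := compF_isMax hv₀
    set C₁ := compF G D v₀ with hC₁def
    have hC₁𝒞 : C₁ ∈ 𝒞 := (h𝒞 C₁).2 hmax
    set T := D \ C₁ with hTdef
    have hTne : T.Nonempty := by
      rcases T.eq_empty_or_nonempty with he | h'
      · exfalso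
        have hDC₁ : D = C₁ := by
          apply Finset.Subset.antisymm _ hmax.1
          intro x hx
          by_contra hxC
          exact (Finset.notMem_empty x) (he ▸ Finset.mem_sdiff.2 ⟨hx, hxC⟩)
        exact hD (hDC₁ ▸ hmax.2.2.1)
      · exact h'
    have hsub : T ⊆ Finset.univ \ spo G C₁ := by
      intro w hw
      obtain ⟨hwD, hwC₁⟩ := Finset.mem_sdiff.1 hw
      rw [Finset.mem_sdiff]
      refine ⟨Finset.mem_univ _, fun hspo => ?_⟩
      rcases mem_spo.1 hspo with h' | ⟨u, huC₁, hadj⟩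
      · exact hwC₁ h'
      · obtain ⟨huD, W, hW⟩ := mem_compF.1 huC₁
        refine hwC₁ (mem_compF.2 ⟨hwD, W.concat hadj, ?_⟩)
        intro x hx
        rw [SimpleGraph.Walk.support_concat] at hx
        rcases List.mem_append.1 hx with h'' | h''
        · exact hW x h''
        · rw [List.mem_singleton] at h''
          subst h''
          exact hwD
    have hindep : Indep p C₁ T :=
      indep_mono p (h C₁ hmax.2.1 hmax.2.2.1) hsub
    have hDsplit : Pr p D i = Pr p C₁ i * Pr p T i := by
      have hu : C₁ ∪ T = D := Finset.union_sdiff_of_subset hmax.1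
      rw [← hu, Pr_union_eq_Pr2, hindep i i]
    have herase : ∀ C' : Finset V, C' ∈ 𝒞.erase C₁ ↔ IsMaxConnComp G T C' := by
      intro C'
      rw [Finset.mem_erase, h𝒞, maxcomp_sdiff hmax]
      tauto
    have hprod : ∏ C' ∈ 𝒞.erase C₁, Pr p C' i = Pr p T i := by
      by_cases hTc : Conn G T
      · have hsing : 𝒞.erase C₁ = {T} := by
          ext C'
          rw [herase, maxcomp_self hTc hTne, Finset.mem_singleton]
        rw [hsing, Finset.prod_singleton]
      · exact (ih T (Finset.sdiff_ssubset hmax.1 hmax.2.1) hTc _ herase i).symm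
    rw [hDsplit, ← Finset.mul_prod_erase 𝒞 _ hC₁𝒞, hprod]

/-- Lemma 1 (conncheck): a binary distribution satisfies the connected set Markov
property for `G` iff for every disconnected set `D`, with partition into
inclusion-maximal connected subsets `C_1, …, C_r`, one has
`P(X_D = i_D) = ∏_j P(X_{C_j} = i_{C_j})` for all cells `i`. -/
theorem stmt0 (G : SimpleGraph V) [DecidableRel G.Adj] (p : (V → Bool) → ℝ)
    (hp : IsDist p) :
    CSMP G p ↔
      ∀ D : Finset V, ¬ Conn G D →
        ∀ 𝒞 : Finset (Finset V), (∀ C : Finset V, C ∈ 𝒞 ↔ IsMaxConnComp G D C) →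
          ∀ i : V → Bool, Pr p D i = ∏ C ∈ 𝒞, Pr p C i := by
  classical
  constructor
  · exact fun h => csmp_forward G p h
  · intro hFact C hCne hCconn
    set T := Finset.univ \ spo G C with hTdef
    by_cases hTe : T = ∅
    · intro a b
      rw [hTe, Pr2_empty_right, Pr_empty p hp, mul_one]
    · have hTne : T.Nonempty := Finset.nonempty_iff_ne_empty.2 hTe
      have hadj : ∀ u ∈ C, ∀ w ∈ T, ¬ G.Adj u w := by
        intro u hu w hw hA
        exact (Finset.mem_sdiff.1 hw).2 (mem_spo.2 (Or.inr ⟨u, hu, hA⟩))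
      have hdisj : ∀ x ∈ C, x ∉ T := fun x hx hxT =>
        (Finset.mem_sdiff.1 hxT).2 (mem_spo.2 (Or.inl hx))
      set D := C ∪ T with hDdef
      have hCmax : IsMaxConnComp G D C := by
        refine ⟨Finset.subset_union_left, hCne, hCconn, ?_⟩
        intro C'' hsub hC''D hC''conn
        refine Finset.Subset.antisymm ?_ hsub
        intro w hw
        obtain ⟨v, hv⟩ := hCne
        obtain ⟨W, hW⟩ := hC''conn v (hsub hv) w hw
        exact walk_stay hadj W (fun x hx => hC''D (hW x hx)) hv
      have hDdisc : ¬ Conn G D := by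
        intro hc
        obtain ⟨v, hv⟩ := hCne
        obtain ⟨w, hw⟩ := hTne
        obtain ⟨W, hW⟩ := hc v (Finset.mem_union_left _ hv) w (Finset.mem_union_right _ hw)
        exact hdisj w (walk_stay hadj W hW hv) hw
      have hcomp : ∀ C' : Finset V,
          IsMaxConnComp G D C' ↔ (C' = C ∨ IsMaxConnComp G T C') := by
        intro C'
        constructor
        · intro hC'
          by_cases he : C' = C
          · exact Or.inl he
          · right
            have hC'T : C' ⊆ T := by
              intro z hz
              rcases Finset.mem_union.1 (hC'.1 hz) with h | h
              · exact absurd (maxcomp_eq_of_inter hC' hCmax hz h) he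
              · exact h
            exact ⟨hC'T, hC'.2.1, hC'.2.2.1, fun C'' h1 h2 h3 =>
              hC'.2.2.2 C'' h1 (h2.trans Finset.subset_union_right) h3⟩
        · rintro (rfl | hC')
          · exact hCmax
          · obtain ⟨hC'T, hC'ne, hC'conn, hC'max⟩ := hC'
            refine ⟨hC'T.trans Finset.subset_union_right, hC'ne, hC'conn, ?_⟩
            intro C'' h1 h2 h3
            have hC''T : C'' ⊆ T := by
              intro y hy
              rcases Finset.mem_union.1 (h2 hy) with hyC | hyT
              · exfalso
                obtain ⟨w, hw⟩ := hC'ne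
                obtain ⟨W, hW⟩ := h3 y hy w (h1 hw)
                have hwC : w ∈ C := walk_stay hadj W (fun x hx => h2 (hW x hx)) hyC
                exact hdisj w hwC (hC'T hw)
              · exact hyT
            exact hC'max C'' h1 hC''T h3
      set 𝒞T : Finset (Finset V) :=
        Finset.univ.filter (fun C' => IsMaxConnComp G T C') with h𝒞Tdef
      have h𝒞T : ∀ C' : Finset V, C' ∈ 𝒞T ↔ IsMaxConnComp G T C' := by
        intro C'; simp [h𝒞Tdef]
      have hC𝒞T : C ∉ 𝒞T := by
        intro hmem
        obtain ⟨v, hv⟩ := hCne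
        exact hdisj v hv (((h𝒞T C).1 hmem).1 hv)
      have h𝒞D : ∀ C' : Finset V, C' ∈ insert C 𝒞T ↔ IsMaxConnComp G D C' := by
        intro C'
        rw [Finset.mem_insert, hcomp, h𝒞T]
      have key : ∀ j : V → Bool, Pr p D j = Pr p C j * Pr p T j := by
        intro j
        rw [hFact D hDdisc (insert C 𝒞T) h𝒞D j, Finset.prod_insert hC𝒞T]
        congr 1
        by_cases hTc : Conn G T
        · have hsing : 𝒞T = {T} := by
            ext C'
            rw [h𝒞T, maxcomp_self hTc hTne, Finset.mem_singleton]
          rw [hsing, Finset.prod_singleton]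
        · exact (hFact T hTc 𝒞T h𝒞T j).symm
      intro a b
      have hdisj' : ∀ x ∈ C, x ∉ T := hdisj
      rw [Pr2_eq_Pr_union p hdisj' a b, ← hDdef, key _]
      rw [Pr_congr p C (b := a) (fun v hv => by rw [if_pos hv]),
        Pr_congr p T (b := b) (fun v hv => by
          rw [if_neg (fun h => hdisj v h hv)])]

end BMMI
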